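/- Define f(I) = Π - (μ+γ+d)(μ+η+σβI)I/(μ+η+σβI+σι) - (μ+ι)(μ+γ+d)(μ+η+σβI)/(β(μ+η+σβI+σι)) + ιη(μ+γ+d)/(β(μ+η+σβI+σι)) + J·I for I ≥ 0, where all parameters Π, β, μ, ι, η, γ, d are positive, σ ∈ (0,1], and 0 ≤ J < μ+γ+d. If R₀ = Πβ(μ+η+σι)/(μ(μ+ι+η)(μ+γ+d)) > 1, then f(0) > 0, f(I) → -∞ as I → ∞, and f is continuous on [0,∞); hence f has a positive root I* > 0. -/

import Mathlib

open Filter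

theorem endemic_equilibrium_exists (Pi β μ ι η γ d σ J : ℝ)
    (hPi : 0 < Pi) (hβ : 0 < β) (hμ : 0 < μ) (hι : 0 < ι) (hη : 0 < η)
    (hγ : 0 < γ) (hd : 0 < d) (hσ : σ ∈ Set.Ioc (0:ℝ) 1)
    (hJ0 : 0 ≤ J) (hJ : J < μ + γ + d)
    (f : ℝ → ℝ)
    (hf : ∀ I, f I = Pi - (μ + γ + d) * (μ + η + σ * β * I) * I / (μ + η + σ * β * I + σ * ι)
        - (μ + ι) * (μ + γ + d) * (μ + η + σ * β * I) / (β * (μ + η + σ * β * I + σ * ι))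
        + ι * η * (μ + γ + d) / (β * (μ + η + σ * β * I + σ * ι)) + J * I)
    (hR0 : Pi * β * (μ + η + σ * ι) / (μ * (μ + ι + η) * (μ + γ + d)) > 1) :
    f 0 > 0 ∧ Tendsto f atTop atBot ∧ ContinuousOn f (Set.Ici 0) ∧
      ∃ I : ℝ, 0 < I ∧ f I = 0 := by
  obtain ⟨hσ0, hσ1⟩ := hσ
  have hE : 0 < μ + η + σ * ι := by positivity
  have hDpos : ∀ I : ℝ, 0 ≤ I → 0 < μ + η + σ * β * I + σ * ι := by
    intro I hI
    have : 0 ≤ σ * β * I := by positivity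
    linarith
  -- f 0 > 0
  have hf0 : f 0 > 0 := by
    have hden : 0 < μ * (μ + ι + η) * (μ + γ + d) := by positivity
    have hR := (one_lt_div hden).mp hR0
    rw [hf]
    simp only [mul_zero, add_zero, zero_div, sub_zero, zero_mul]
    have key : Pi - (μ + ι) * (μ + γ + d) * (μ + η) / (β * (μ + η + σ * ι))
        + ι * η * (μ + γ + d) / (β * (μ + η + σ * ι))
        = (Pi * (β * (μ + η + σ * ι)) - (μ + ι) * (μ + γ + d) * (μ + η) + ι * η * (μ + γ + d))
          / (β * (μ + η + σ * ι)) := by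
      field_simp
    rw [gt_iff_lt, key]
    apply div_pos _ (by positivity)
    nlinarith [hR]
  -- linear upper bound
  set C : ℝ := Pi + (μ + γ + d) * ι / β + ι * η * (μ + γ + d) / (β * (μ + η + σ * ι)) with hC
  have hb : ∀ I : ℝ, 0 ≤ I → f I ≤ C - ((μ + γ + d) - J) * I := by
    intro I hI
    have hD := hDpos I hI
    rw [hf]
    have hT3 : 0 ≤ (μ + ι) * (μ + γ + d) * (μ + η + σ * β * I) / (β * (μ + η + σ * β * I + σ * ι)) := by
      apply div_nonneg _ (by positivity)
      have h0 : 0 ≤ σ * β * I := by positivity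
      apply mul_nonneg (by positivity)
      linarith
    have hT4 : ι * η * (μ + γ + d) / (β * (μ + η + σ * β * I + σ * ι))
        ≤ ι * η * (μ + γ + d) / (β * (μ + η + σ * ι)) := by
      rw [div_le_div_iff₀ (by positivity) (by positivity)]
      have h0 : 0 ≤ σ * β * I := by positivity
      nlinarith [mul_nonneg (mul_nonneg (mul_nonneg (mul_nonneg (mul_nonneg hι.le hη.le)
        (by positivity : (0:ℝ) ≤ μ + γ + d)) hβ.le) hσ0.le) (mul_nonneg hβ.le hI)]
    have hT2 : (μ + γ + d) * I - (μ + γ + d) * ι / β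
        ≤ (μ + γ + d) * (μ + η + σ * β * I) * I / (μ + η + σ * β * I + σ * ι) := by
      rw [le_div_iff₀ hD]
      have hβ' : β ≠ 0 := ne_of_gt hβ
      have expand : ((μ + γ + d) * I - (μ + γ + d) * ι / β) * (μ + η + σ * β * I + σ * ι) * β
          ≤ (μ + γ + d) * (μ + η + σ * β * I) * I * β := by
        field_simp
        nlinarith [mul_pos (mul_pos hσ0 hι) hι,
          mul_pos (mul_pos hι (add_pos hμ hη)) (by positivity : (0:ℝ) < μ + γ + d),
          mul_nonneg (mul_nonneg (mul_nonneg hσ0.le hβ.le) hI) hι.le]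
      exact (mul_le_mul_iff_of_pos_right hβ).mp expand
    linarith
  -- tendsto atBot
  have htend : Tendsto f atTop atBot := by
    have hc : 0 < (μ + γ + d) - J := by linarith
    have h1 : Tendsto (fun I : ℝ => ((μ + γ + d) - J) * I) atTop atTop :=
      tendsto_id.const_mul_atTop hc
    have h2 : Tendsto (fun I : ℝ => C - ((μ + γ + d) - J) * I) atTop atBot := by
      simpa [sub_eq_add_neg] using
        tendsto_atBot_add_const_left atTop C (tendsto_neg_atTop_atBot.comp h1)
    refine tendsto_atBot_mono' atTop ?_ h2
    filter_upwards [eventually_ge_atTop (0:ℝ)] with I hI using hb I hI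
  -- continuity
  have hcont : ContinuousOn f (Set.Ici 0) := by
    have hfe : f = fun I => Pi - (μ + γ + d) * (μ + η + σ * β * I) * I / (μ + η + σ * β * I + σ * ι)
        - (μ + ι) * (μ + γ + d) * (μ + η + σ * β * I) / (β * (μ + η + σ * β * I + σ * ι))
        + ι * η * (μ + γ + d) / (β * (μ + η + σ * β * I + σ * ι)) + J * I := funext hf
    rw [hfe]
    have h1 : ∀ I ∈ Set.Ici (0:ℝ), μ + η + σ * β * I + σ * ι ≠ 0 :=
      fun I hI => ne_of_gt (hDpos I hI)
    have h2 : ∀ I ∈ Set.Ici (0:ℝ), β * (μ + η + σ * β * I + σ * ι) ≠ 0 :=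
      fun I hI => ne_of_gt (mul_pos hβ (hDpos I hI))
    apply ContinuousOn.add
    apply ContinuousOn.add
    apply ContinuousOn.sub
    apply ContinuousOn.sub
    · exact continuousOn_const
    · exact ContinuousOn.div (by fun_prop) (by fun_prop) h1
    · exact ContinuousOn.div (by fun_prop) (by fun_prop) h2
    · exact ContinuousOn.div (by fun_prop) (by fun_prop) h2
    · fun_prop
  refine ⟨hf0, htend, hcont, ?_⟩
  -- find M with f M < 0
  have hev := htend.eventually (eventually_lt_atBot (0:ℝ))
  rw [eventually_atTop] at hev
  obtain ⟨M0, hM0⟩ := hev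
  set M : ℝ := max M0 0 with hM
  have hM0' : (0:ℝ) ≤ M := le_max_right _ _
  have hfM : f M < 0 := hM0 M (le_max_left _ _)
  have hsub : Set.Icc (0:ℝ) M ⊆ Set.Ici 0 := Set.Icc_subset_Ici_self
  have hivt := intermediate_value_Icc' hM0' (hcont.mono hsub)
  have h0mem : (0:ℝ) ∈ Set.Icc (f M) (f 0) := ⟨hfM.le, hf0.le⟩
  obtain ⟨I, hImem, hfI⟩ := hivt h0mem
  refine ⟨I, ?_, hfI⟩
  rcases lt_or_eq_of_le hImem.1 with h | h
  · exact h
  · exfalso; rw [← h] at hfI; linarith
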